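/- Let m ≥ 1 and set α_i = 1/(1 − cos(2πi/(2m+1))) for i = 1,…,m. Then for every complex number τ, the function r_m(τ) = (1/2)(1+τ) ∏_{i=1}^m ((1−α_i) − α_i τ)^2 + (1/2)(1−τ) ∏_{i=1}^m ((1−α_i) + α_i τ)^2 equals 1/(2m+1)^2; in particular r_m is independent of τ. -/

import Mathlib

open Finset Complex

private lemma aux_prod_range {n : ℕ} (hn : 0 < n) {ω : ℂ} (hω : IsPrimitiveRoot ω n) (z : ℂ) :
    ∏ i ∈ Finset.range n, (z - ω ^ i) = z ^ n - 1 := by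
  haveI : NeZero n := ⟨hn.ne'⟩
  have h := congrArg (Polynomial.eval z) (Polynomial.X_pow_sub_one_eq_prod hn hω)
  simp only [Polynomial.eval_sub, Polynomial.eval_pow, Polynomial.eval_X, Polynomial.eval_one,
    Polynomial.eval_prod, Polynomial.eval_C] at h
  rw [h]
  apply Finset.prod_bij (fun i _ => ω ^ i)
  · intro i hi
    rw [Polynomial.mem_nthRootsFinset hn]
    rw [← pow_mul, mul_comm, pow_mul, hω.pow_eq_one, one_pow]
  · intro a ha b hb hab
    exact hω.pow_inj (Finset.mem_range.mp ha) (Finset.mem_range.mp hb) hab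
  · intro ζ hζ
    have hζn : ζ ^ n = 1 := (Polynomial.mem_nthRootsFinset hn _).mp hζ
    obtain ⟨i, hi, rfl⟩ := hω.eq_pow_of_pow_eq_one hζn
    exact ⟨i, Finset.mem_range.mpr hi, rfl⟩
  · intros; rfl

private lemma aux_key {n : ℕ} (hn : 0 < n) {ω : ℂ} (hω : IsPrimitiveRoot ω n) (z : ℂ) :
    (z - 1) * ∏ i ∈ Finset.Icc 1 (n - 1), (z - ω ^ i) = z ^ n - 1 := by
  rw [← aux_prod_range hn hω z]
  have hr : Finset.range n = insert 0 (Finset.Icc 1 (n - 1)) := by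
    ext x; simp only [Finset.mem_range, Finset.mem_insert, Finset.mem_Icc]; omega
  rw [hr, Finset.prod_insert (by simp)]
  simp

private lemma aux_geom {n : ℕ} (hn : 0 < n) {ω : ℂ} (hω : IsPrimitiveRoot ω n) :
    ∏ i ∈ Finset.Icc 1 (n - 1), ((1 : ℂ) - ω ^ i) = (n : ℂ) := by
  have hfg : (fun z : ℂ => ∏ i ∈ Finset.Icc 1 (n - 1), (z - ω ^ i))
      = fun z : ℂ => ∑ i ∈ Finset.range n, z ^ i := by
    apply Continuous.ext_on (dense_compl_singleton (1 : ℂ))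
    · exact continuous_finset_prod _ fun i _ => by continuity
    · exact continuous_finset_sum _ fun i _ => by continuity
    · intro z hz
      have hz1 : z - 1 ≠ 0 := sub_ne_zero.mpr hz
      have h1 := aux_key hn hω z
      have h2 : (∑ i ∈ Finset.range n, z ^ i) * (z - 1) = z ^ n - 1 := geom_sum_mul z n
      apply mul_right_cancel₀ hz1
      linear_combination h1 - h2
  have := congrFun hfg 1
  simpa using this

private lemma aux_pair (m : ℕ) (f : ℕ → ℂ) :
    ∏ i ∈ Finset.Icc 1 m, (f i * f (2 * m + 1 - i))
      = ∏ i ∈ Finset.Icc 1 (2 * m), f i := by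
  rw [Finset.prod_mul_distrib]
  have h2 : ∏ i ∈ Finset.Icc 1 m, f (2 * m + 1 - i)
      = ∏ i ∈ Finset.Icc (m + 1) (2 * m), f i := by
    refine Finset.prod_nbij' (fun i => 2 * m + 1 - i) (fun j => 2 * m + 1 - j) ?_ ?_ ?_ ?_ ?_ <;>
      intro a ha <;> simp only [Finset.mem_Icc] at * <;> omega
  rw [h2, (by rw [← Finset.Icc_add_one_left_eq_Ioc, zero_add] : Finset.Icc 1 m = Finset.Ioc 0 m), (by rw [← Finset.Icc_add_one_left_eq_Ioc, zero_add] : Finset.Icc 1 (2 * m) = Finset.Ioc 0 (2 * m)), Finset.Icc_add_one_left_eq_Ioc m (2 * m)]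
  exact Finset.prod_Ioc_consecutive f (Nat.zero_le m) (by omega)

/-- With `α_i = 1/(1 − cos(2πi/(2m+1)))`, the scalar response
`r_m(τ) = (1/2)(1+τ)∏((1−α_i)−α_iτ)² + (1/2)(1−τ)∏((1−α_i)+α_iτ)²`
equals `1/(2m+1)²` for every complex `τ`. -/
theorem rm_const (m : ℕ) (hm : 1 ≤ m) (τ : ℂ)
    (α : ℕ → ℂ)
    (hα : ∀ i ∈ Finset.Icc 1 m,
      α i = (1 - (Real.cos (2 * Real.pi * i / (2 * m + 1)) : ℂ))⁻¹) :
    (1 / 2) * (1 + τ) * (∏ i ∈ Finset.Icc 1 m, ((1 - α i) - α i * τ) ^ 2)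
      + (1 / 2) * (1 - τ) * (∏ i ∈ Finset.Icc 1 m, ((1 - α i) + α i * τ) ^ 2)
    = 1 / (2 * m + 1) ^ 2 := by
  set n : ℕ := 2 * m + 1 with hn
  have hn0 : 0 < n := by omega
  set ω : ℂ := Complex.exp (2 * Real.pi * I / n) with hω_def
  have hω : IsPrimitiveRoot ω n := Complex.isPrimitiveRoot_exp n hn0.ne'
  -- choose z with z^2 - 2τz + 1 = 0
  obtain ⟨s, hs⟩ : ∃ s : ℂ, s ^ 2 = τ ^ 2 - 1 :=
    ⟨(τ ^ 2 - 1) ^ ((2 : ℕ) : ℂ)⁻¹, Complex.cpow_nat_inv_pow _ two_ne_zero⟩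
  set z : ℂ := τ + s with hz_def
  have hz2 : z ^ 2 - 2 * τ * z + 1 = 0 := by
    rw [hz_def]; linear_combination hs
  have hzne : z ≠ 0 := by
    intro h
    rw [h] at hz2
    simp at hz2
  -- per-index identities
  have hJ : ∀ i ∈ Finset.Icc 1 m,
      (1 - ω ^ i) * (1 - ω ^ (n - i)) * z * ((1 - α i) - α i * τ)
          = -((z + ω ^ i) * (z + ω ^ (n - i)))
        ∧ (1 - ω ^ i) * (1 - ω ^ (n - i)) * z * ((1 - α i) + α i * τ)
          = (z - ω ^ i) * (z - ω ^ (n - i)) := by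
    intro i him
    have hi := Finset.mem_Icc.mp him
    have hin : i < n := by omega
    have huv : ω ^ i * ω ^ (n - i) = 1 := by
      rw [← pow_add, show i + (n - i) = n by omega, hω.pow_eq_one]
    have hexp : ω ^ i = Complex.exp ((2 * Real.pi * i / (2 * m + 1) : ℝ) * I) := by
      rw [hω_def, ← Complex.exp_nat_mul]
      congr 1
      rw [hn]
      push_cast
      ring
    have hexp' : ω ^ (n - i)
        = Complex.exp (-((2 * Real.pi * i / (2 * m + 1) : ℝ) * I)) := by
      have hinv : ω ^ (n - i) = (ω ^ i)⁻¹ :=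
        eq_inv_of_mul_eq_one_left (by rw [mul_comm]; exact huv)
      rw [hinv, hexp, ← Complex.exp_neg]
    have hcos : ((Real.cos (2 * Real.pi * i / (2 * m + 1)) : ℝ) : ℂ)
        = (ω ^ i + ω ^ (n - i)) / 2 := by
      rw [Complex.ofReal_cos, hexp, hexp', ← neg_mul, ← Complex.cos_sub_sin_I,
        Complex.exp_mul_I]
      ring
    have hu1 : ω ^ i ≠ 1 := hω.pow_ne_one_of_pos_of_lt (by omega) hin
    have hv1 : ω ^ (n - i) ≠ 1 := hω.pow_ne_one_of_pos_of_lt (by omega) (by omega)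
    have hfac : (1 - ω ^ i) * (1 - ω ^ (n - i))
        = 2 * (1 - (ω ^ i + ω ^ (n - i)) / 2) := by linear_combination huv
    have hden : (1 : ℂ) - (ω ^ i + ω ^ (n - i)) / 2 ≠ 0 := by
      intro h
      have hne := mul_ne_zero (sub_ne_zero.mpr (Ne.symm hu1)) (sub_ne_zero.mpr (Ne.symm hv1))
      rw [hfac, h] at hne
      simp at hne
    have halpha : α i * ((1 - ω ^ i) * (1 - ω ^ (n - i))) = 2 := by
      have hden2 : (2 : ℂ) - (ω ^ i + ω ^ (n - i)) ≠ 0 := by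
        intro h; apply hden; linear_combination h / 2
      rw [hα i him, hcos, hfac]
      field_simp
    constructor
    · linear_combination hz2 + (z + 1) * huv - ((1 + τ) * z) * halpha
    · linear_combination -hz2 + (z - 1) * huv - ((1 - τ) * z) * halpha
  -- assemble products
  have hcard : (Finset.Icc 1 m).card = m := by simp
  have hzz : z ^ (2 * m) = ∏ _i ∈ Finset.Icc 1 m, z ^ 2 := by
    rw [Finset.prod_const, hcard, ← pow_mul, mul_comm]
  have SA : (∏ i ∈ Finset.Icc 1 m, ((1 - ω ^ i) * (1 - ω ^ (n - i)))) ^ 2 * z ^ (2 * m)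
        * (∏ i ∈ Finset.Icc 1 m, ((1 - α i) - α i * τ) ^ 2)
      = (∏ i ∈ Finset.Icc 1 m, ((z + ω ^ i) * (z + ω ^ (n - i)))) ^ 2 := by
    rw [← Finset.prod_pow, ← Finset.prod_pow, hzz, ← Finset.prod_mul_distrib,
      ← Finset.prod_mul_distrib]
    apply Finset.prod_congr rfl
    intro i hi
    have hJ1 := (hJ i hi).1
    calc ((1 - ω ^ i) * (1 - ω ^ (n - i))) ^ 2 * z ^ 2 * ((1 - α i) - α i * τ) ^ 2
        = ((1 - ω ^ i) * (1 - ω ^ (n - i)) * z * ((1 - α i) - α i * τ)) ^ 2 := by ring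
      _ = (-((z + ω ^ i) * (z + ω ^ (n - i)))) ^ 2 := by rw [hJ1]
      _ = ((z + ω ^ i) * (z + ω ^ (n - i))) ^ 2 := by ring
  have SB : (∏ i ∈ Finset.Icc 1 m, ((1 - ω ^ i) * (1 - ω ^ (n - i)))) ^ 2 * z ^ (2 * m)
        * (∏ i ∈ Finset.Icc 1 m, ((1 - α i) + α i * τ) ^ 2)
      = (∏ i ∈ Finset.Icc 1 m, ((z - ω ^ i) * (z - ω ^ (n - i)))) ^ 2 := by
    rw [← Finset.prod_pow, ← Finset.prod_pow, hzz, ← Finset.prod_mul_distrib,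
      ← Finset.prod_mul_distrib]
    apply Finset.prod_congr rfl
    intro i hi
    have hJ2 := (hJ i hi).2
    calc ((1 - ω ^ i) * (1 - ω ^ (n - i))) ^ 2 * z ^ 2 * ((1 - α i) + α i * τ) ^ 2
        = ((1 - ω ^ i) * (1 - ω ^ (n - i)) * z * ((1 - α i) + α i * τ)) ^ 2 := by ring
      _ = ((z - ω ^ i) * (z - ω ^ (n - i))) ^ 2 := by rw [hJ2]
  have hE : ∏ i ∈ Finset.Icc 1 m, ((1 - ω ^ i) * (1 - ω ^ (n - i))) = (n : ℂ) := by
    have hp := aux_pair m (fun j => 1 - ω ^ j)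
    rw [← hn, show 2 * m = n - 1 by omega] at hp
    exact hp.trans (aux_geom hn0 hω)
  have hQm : (z - 1) * ∏ i ∈ Finset.Icc 1 m, ((z - ω ^ i) * (z - ω ^ (n - i)))
      = z ^ n - 1 := by
    have hp := aux_pair m (fun j => z - ω ^ j)
    rw [← hn, show 2 * m = n - 1 by omega] at hp
    rw [hp]
    exact aux_key hn0 hω z
  have hQp : (z + 1) * ∏ i ∈ Finset.Icc 1 m, ((z + ω ^ i) * (z + ω ^ (n - i)))
      = z ^ n + 1 := by
    have hp := aux_pair m (fun j => z + ω ^ j)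
    rw [← hn, show 2 * m = n - 1 by omega] at hp
    rw [hp]
    have hk := aux_key hn0 hω (-z)
    have hflip : ∏ i ∈ Finset.Icc 1 (n - 1), (-z - ω ^ i)
        = ∏ i ∈ Finset.Icc 1 (n - 1), (z + ω ^ i) := by
      calc ∏ i ∈ Finset.Icc 1 (n - 1), (-z - ω ^ i)
          = ∏ i ∈ Finset.Icc 1 (n - 1), (-1 * (z + ω ^ i)) :=
            Finset.prod_congr rfl fun i _ => by ring
        _ = (-1 : ℂ) ^ (Finset.Icc 1 (n - 1)).card
            * ∏ i ∈ Finset.Icc 1 (n - 1), (z + ω ^ i) := by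
            rw [Finset.prod_mul_distrib, Finset.prod_const]
        _ = ∏ i ∈ Finset.Icc 1 (n - 1), (z + ω ^ i) := by
            rw [show (Finset.Icc 1 (n - 1)).card = 2 * m by rw [Nat.card_Icc]; omega, pow_mul]
            norm_num
    rw [hflip] at hk
    have hodd : (-z) ^ n = -(z ^ n) := Odd.neg_pow ⟨m, by omega⟩ z
    rw [hodd] at hk
    linear_combination -hk
  -- the central cancellation
  set Qp : ℂ := ∏ i ∈ Finset.Icc 1 m, ((z + ω ^ i) * (z + ω ^ (n - i))) with hQp_def
  set Qm : ℂ := ∏ i ∈ Finset.Icc 1 m, ((z - ω ^ i) * (z - ω ^ (n - i))) with hQm_def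
  have hzn : z ^ n = z ^ (2 * m) * z := by rw [hn]; ring
  have hC4 : 4 * z * ((1 / 2) * (1 + τ) * Qp ^ 2 + (1 / 2) * (1 - τ) * Qm ^ 2)
      = 4 * z * z ^ (2 * m) := by
    rw [hzn] at hQp hQm
    linear_combination ((z + 1) * Qp + z ^ (2 * m) * z + 1) * hQp
      - ((z - 1) * Qm + z ^ (2 * m) * z - 1) * hQm + (Qm ^ 2 - Qp ^ 2) * hz2
  have hC : (1 / 2) * (1 + τ) * Qp ^ 2 + (1 / 2) * (1 - τ) * Qm ^ 2 = z ^ (2 * m) :=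
    mul_left_cancel₀ (by simpa using hzne) hC4
  -- finish
  have hNcast : ((n : ℕ) : ℂ) = 2 * (m : ℂ) + 1 := by rw [hn]; push_cast; ring
  rw [hNcast] at hE
  rw [hE] at SA SB
  have hNne : (2 * (m : ℂ) + 1) ≠ 0 := by
    rw [← hNcast]
    exact Nat.cast_ne_zero.mpr hn0.ne'
  have hmul_ne : ((2 * (m : ℂ) + 1) ^ 2 * z ^ (2 * m)) ≠ 0 :=
    mul_ne_zero (pow_ne_zero _ hNne) (pow_ne_zero _ hzne)
  refine mul_left_cancel₀ hmul_ne ?_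
  have hR : (2 * (m : ℂ) + 1) ^ 2 * z ^ (2 * m) * (1 / (2 * (m : ℂ) + 1) ^ 2)
      = z ^ (2 * m) := by
    field_simp
  rw [hR]
  linear_combination ((1 / 2) * (1 + τ)) * SA + ((1 / 2) * (1 - τ)) * SB + hC
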